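/- Let $R$ be a commutative ring and $\pi \in R$ a non-zero divisor. Then in the formal power series ring $R\llbracket T_0,\ldots,T_m \rrbracket$, the element $T_0 + \cdots + T_m - \pi$ is a non-zero divisor. -/

import Mathlib

/-- If `π` is a non-zero divisor of `R`, then `T₀ + ⋯ + T_m - π` is a
non-zero divisor in the formal power series ring `R⟦T₀, …, T_m⟧`. -/
theorem stmt_3 {R : Type*} [CommRing R] (π : R) (hπ : π ∈ nonZeroDivisors R) (m : ℕ) :
    (∑ i : Fin (m + 1), MvPowerSeries.X i) - (MvPowerSeries.C : R →+* MvPowerSeries (Fin (m + 1)) R) π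
      ∈ nonZeroDivisors (MvPowerSeries (Fin (m + 1)) R) := by
  apply MvPowerSeries.mem_nonZeroDivisors_of_constantCoeff
  simp only [map_sub, map_sum, MvPowerSeries.constantCoeff_X,
    MvPowerSeries.constantCoeff_C, Finset.sum_const_zero, zero_sub]
  exact ⟨fun x hx => hπ.1 x (by simpa using hx), fun x hx => hπ.2 x (by simpa using hx)⟩
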